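/- arXiv:1604.01470 — 2 statements merged into one kernel-verified Lean document; each statement's English description precedes it below -/
import Mathlib

section
/- For every x ∈ (0,1] and every n ≥ 1, the length of the basic interval of order n containing x satisfies |I_n(x)| ≥ β^{−(n + t_{n − k_n*(x)} + 1)}. -/
open MeasureTheory Filter Set

noncomputable section

/-- The β-transformation on `(0,1]`: `T_β x = βx − ⌈βx⌉ + 1`. -/
def Tbeta (β x : ℝ) : ℝ := β * x - ⌈β * x⌉ + 1

/-- The digits of the β-expansion, 0-indexed: `eps β x n` is the `(n+1)`-st digit
`ε_{n+1}(x,β) = ⌈β T_β^n x⌉ − 1`. -/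
def eps (β x : ℝ) (n : ℕ) : ℤ := ⌈β * (Tbeta β)^[n] x⌉ - 1

/-- The basic interval of order `n` containing `x`:
all `y ∈ (0,1]` whose first `n` digits agree with those of `x`. -/
def In (β x : ℝ) (n : ℕ) : Set ℝ := {y ∈ Ioc (0:ℝ) 1 | ∀ j < n, eps β y j = eps β x j}

/-- The length of a set (Lebesgue measure). -/
def len (s : Set ℝ) : ℝ := (volume s).toReal

/-- `tseq β n = t_n`: the maximal length of the block of zero digits of the
β-expansion of `1` immediately following position `n` (digits `ε*_{n+1},…,ε*_{n+k}`). -/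
def tseq (β : ℝ) (n : ℕ) : ℕ := sSup {k : ℕ | ∀ j < k, eps β 1 (n + j) = 0}

/-- `Gam β n = Γ_n = max_{1 ≤ k ≤ n} t_k`. -/
def Gam (β : ℝ) (n : ℕ) : ℕ := Finset.sup (Finset.Icc 1 n) (tseq β)

/-- `lam β = λ(β) = limsup_n Γ_n / n`. -/
def lam (β : ℝ) : ℝ := Filter.limsup (fun n : ℕ => (Gam β n : ℝ) / n) atTop

/-- `kstar β x n = k_n^*(x)`: the smallest `k ≥ 0` such that
`(ε_{k+1}(x),…,ε_n(x)) = (ε*_1,…,ε*_{n−k})`. -/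
def kstar (β x : ℝ) (n : ℕ) : ℕ := sInf {k : ℕ | ∀ i < n - k, eps β x (k + i) = eps β 1 i}

/-- `tau β x = τ(x) = limsup_n t_{n − k_n^*(x)} / n`. -/
def tau (β x : ℝ) : ℝ :=
  Filter.limsup (fun n : ℕ => (tseq β (n - kstar β x n) : ℝ) / n) atTop

/-- The upper density `\overline{D}(x) = limsup_n (−log_β |I_n(x)|)/n`. -/
def upperD (β x : ℝ) : ℝ :=
  Filter.limsup (fun n : ℕ => -Real.logb β (len (In β x n)) / n) atTop

/-- The lower density `\underline{D}(x) = liminf_n (−log_β |I_n(x)|)/n`. -/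
def lowerD (β x : ℝ) : ℝ :=
  Filter.liminf (fun n : ℕ => -Real.logb β (len (In β x n)) / n) atTop

/-- The basic interval (cylinder) associated to a finite word `w` of digits:
all `x ∈ (0,1]` whose β-expansion starts with `w`. -/
def cyl (β : ℝ) (w : List ℤ) : Set ℝ :=
  {x ∈ Ioc (0:ℝ) 1 | ∀ j < w.length, eps β x j = w.getD j 0}

/-- A finite word is admissible if it occurs as the initial digits of some `x ∈ (0,1]`. -/
def Admissible (β : ℝ) (w : List ℤ) : Prop := (cyl β w).Nonempty

/-- A basic interval is full if its length is `β^{−n}` where `n` is the order. -/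
def IsFull (β : ℝ) (w : List ℤ) : Prop := len (cyl β w) = β ^ (-(w.length : ℤ))

/-- The word `(ε*_1,…,ε*_n)` of the first `n` digits of the β-expansion of `1`. -/
def estarWord (β : ℝ) (n : ℕ) : List ℤ := (List.range n).map (eps β 1)

/-- The interior of a set relative to the subspace `[0,1]`
(for `S ⊆ [0,1]` this is exactly the interior of `S` in the topology of `[0,1]`). -/
def intIn01 (S : Set ℝ) : Set ℝ := Icc 0 1 \ closure (Icc 0 1 \ S)

lemma Tbeta_mem (β z : ℝ) : Tbeta β z ∈ Ioc (0:ℝ) 1 := by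
  constructor
  · have h := Int.ceil_lt_add_one (β * z)
    simp only [Tbeta]; linarith
  · have h := Int.le_ceil (β * z); simp only [Tbeta]; linarith

lemma iter_mem (β : ℝ) {z : ℝ} (hz : z ∈ Ioc (0:ℝ) 1) (j : ℕ) :
    (Tbeta β)^[j] z ∈ Ioc (0:ℝ) 1 := by
  cases j with
  | zero => exact hz
  | succ j => rw [Function.iterate_succ_apply']; exact Tbeta_mem β _

lemma eps_nonneg {β : ℝ} (hβ : 0 < β) {z : ℝ} (hz : z ∈ Ioc (0:ℝ) 1) (i : ℕ) :
    0 ≤ eps β z i := by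
  have h : (0:ℝ) < β * (Tbeta β)^[i] z := mul_pos hβ (iter_mem β hz i).1
  have := Int.ceil_pos.mpr h
  simp only [eps]; omega

def Sn (β z : ℝ) (j : ℕ) : ℝ := ∑ i ∈ Finset.range j, (eps β z i : ℝ) * β ^ (-(i:ℤ)-1)

lemma Tbeta_step (β z : ℝ) (j : ℕ) :
    (Tbeta β)^[j+1] z = β * (Tbeta β)^[j] z - (eps β z j : ℝ) := by
  rw [Function.iterate_succ_apply']
  simp only [Tbeta, eps]
  push_cast; ring

lemma eps_shift (β z : ℝ) (a i : ℕ) : eps β z (a + i) = eps β ((Tbeta β)^[a] z) i := by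
  simp only [eps, Nat.add_comm a i, Function.iterate_add_apply]

lemma iter_eq {β : ℝ} (hβ : 0 < β) (z : ℝ) (j : ℕ) :
    (Tbeta β)^[j] z = β ^ (j:ℤ) * (z - Sn β z j) := by
  induction j with
  | zero => simp [Sn]
  | succ j ih =>
    have hne : β ≠ 0 := hβ.ne'
    have h1 : β ^ ((j:ℤ)+1) * β ^ (-(j:ℤ)-1) = 1 := by
      rw [← zpow_add₀ hne]; norm_num
    have h2 : β ^ ((j:ℤ)+1) = β * β ^ (j:ℤ) := by
      rw [zpow_add₀ hne, zpow_one, mul_comm]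
    have h3 : Sn β z (j+1) = Sn β z j + (eps β z j : ℝ) * β ^ (-(j:ℤ)-1) :=
      Finset.sum_range_succ _ _
    rw [Tbeta_step, ih]
    push_cast
    rw [h3]
    linear_combination (Sn β z j - z) * h2 + (eps β z j : ℝ) * h1

lemma Sn_congr {β z w : ℝ} {j : ℕ} (h : ∀ i < j, eps β z i = eps β w i) :
    Sn β z j = Sn β w j := by
  unfold Sn
  exact Finset.sum_congr rfl (fun i hi => by rw [h i (Finset.mem_range.mp hi)])

lemma Sn_nonneg {β : ℝ} (hβ : 0 < β) {z : ℝ} (hz : z ∈ Ioc (0:ℝ) 1) (j : ℕ) :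
    0 ≤ Sn β z j := by
  apply Finset.sum_nonneg
  intro i _
  have h1 : (0:ℝ) ≤ (eps β z i : ℝ) := by exact_mod_cast eps_nonneg hβ hz i
  positivity

lemma Sn_sub {β : ℝ} (hβ : 0 < β) (z : ℝ) (m : ℕ) :
    z - Sn β z m = β ^ (-(m:ℤ)) * (Tbeta β)^[m] z := by
  rw [iter_eq hβ z m, ← mul_assoc, ← zpow_add₀ hβ.ne']
  norm_num

lemma match_digits {β x : ℝ} (hβ : 1 < β) (hx : x ∈ Ioc (0:ℝ) 1) (n : ℕ) {y : ℝ}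
    (hy1 : Sn β x n < y)
    (hy2 : ∀ m ≤ n, y - Sn β x n ≤
      β ^ (-(m:ℤ)) * (1 - (Tbeta β)^[m] x) + β ^ (-(n:ℤ)) * (Tbeta β)^[n] x) :
    y ∈ Ioc (0:ℝ) 1 ∧ ∀ j < n, eps β y j = eps β x j := by
  have hβ0 : (0:ℝ) < β := lt_trans one_pos hβ
  have hne : β ≠ 0 := hβ0.ne'
  -- main induction
  have main : ∀ j, j ≤ n → ∀ i < j, eps β y i = eps β x i := by
    intro j
    induction j with
    | zero => intro _ i hi; omega
    | succ j ih =>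
      intro hjn i hi
      have hjn' : j ≤ n := le_of_lt (Nat.lt_of_succ_le hjn)
      have hjltn : j < n := Nat.lt_of_succ_le hjn
      rcases Nat.lt_or_ge i j with h | h
      · exact ih hjn' i h
      · have hij : i = j := by omega
        subst hij
        -- digits below i agree
        have hagree : ∀ i' < i, eps β y i' = eps β x i' := ih hjn'
        have hS : Sn β y i = Sn β x i := Sn_congr hagree
        have hy_iter : (Tbeta β)^[i] y = β ^ (i:ℤ) * (y - Sn β x i) := by
          rw [iter_eq hβ0 y i, hS]
        -- abbreviations
        set B := β ^ (i:ℤ) with hB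
        have hBpos : 0 < B := zpow_pos hβ0 _
        have hC1 : (β * B) * β ^ (-(i:ℤ)-1) = 1 := by
          rw [hB, mul_assoc, ← zpow_add₀ hne,
            show (i:ℤ) + (-(i:ℤ)-1) = -1 by ring, zpow_neg_one]
          exact mul_inv_cancel₀ hne
        have hC2 : (β * B) * β ^ (-(i:ℤ)) = β := by
          rw [hB, mul_assoc, ← zpow_add₀ hne,
            show (i:ℤ) + (-(i:ℤ)) = 0 by ring, zpow_zero, mul_one]
        -- lower bound: β T^i y > eps x i
        have hsum : Sn β x n - Sn β x i = ∑ l ∈ Finset.Ico i n, (eps β x l : ℝ) * β ^ (-(l:ℤ)-1) := by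
          unfold Sn
          simp only [Finset.range_eq_Ico]
          rw [← Finset.sum_Ico_consecutive _ (Nat.zero_le i) (le_of_lt hjltn)]
          ring
        have hterm : (eps β x i : ℝ) * β ^ (-(i:ℤ)-1) ≤ Sn β x n - Sn β x i := by
          rw [hsum]
          apply Finset.single_le_sum (f := fun l => (eps β x l : ℝ) * β ^ (-(l:ℤ)-1))
          · intro l _
            have h1 : (0:ℝ) ≤ (eps β x l : ℝ) := by exact_mod_cast eps_nonneg hβ0 hx l
            positivity
          · exact Finset.mem_Ico.mpr ⟨le_refl i, hjltn⟩
        have hlow : (eps β x i : ℝ) < β * (Tbeta β)^[i] y := by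
          rw [hy_iter]
          have h1 : (eps β x i : ℝ) * β ^ (-(i:ℤ)-1) < y - Sn β x i := by
            have : Sn β x i + (eps β x i : ℝ) * β ^ (-(i:ℤ)-1) ≤ Sn β x n := by linarith
            linarith
          calc (eps β x i : ℝ) = (β * B) * ((eps β x i : ℝ) * β ^ (-(i:ℤ)-1)) := by
                rw [mul_comm ((eps β x i : ℝ)) _, ← mul_assoc, hC1, one_mul]
            _ < (β * B) * (y - Sn β x i) := by
                exact mul_lt_mul_of_pos_left h1 (by positivity)
            _ = β * (B * (y - Sn β x i)) := by ring
        -- upper bound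
        have hstep : (Tbeta β)^[i+1] x = β * (Tbeta β)^[i] x - (eps β x i : ℝ) := Tbeta_step β x i
        have hxi : x - Sn β x i = β ^ (-(i:ℤ)) * (Tbeta β)^[i] x := Sn_sub hβ0 x i
        have hxn : x - Sn β x n = β ^ (-(n:ℤ)) * (Tbeta β)^[n] x := Sn_sub hβ0 x n
        have hy2' := hy2 (i+1) hjn
        have hcast : (((i+1:ℕ)):ℤ) = (i:ℤ)+1 := by push_cast; ring
        rw [hcast] at hy2'
        have hup : β * (Tbeta β)^[i] y ≤ (eps β x i : ℝ) + 1 := by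
          rw [hy_iter]
          have h1 : y - Sn β x i ≤ β ^ (-((i:ℤ)+1)) * (1 - (Tbeta β)^[i+1] x)
              + β ^ (-(i:ℤ)) * (Tbeta β)^[i] x := by
            have hSdiff : Sn β x n - Sn β x i
                = β ^ (-(i:ℤ)) * (Tbeta β)^[i] x - β ^ (-(n:ℤ)) * (Tbeta β)^[n] x := by
              rw [← hxi, ← hxn]; ring
            linarith
          have h2 : (β * B) * β ^ (-((i:ℤ)+1)) = 1 := by
            rw [show -((i:ℤ)+1) = -(i:ℤ)-1 by ring]; exact hC1
          calc β * (B * (y - Sn β x i)) = (β * B) * (y - Sn β x i) := by ring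
            _ ≤ (β * B) * (β ^ (-((i:ℤ)+1)) * (1 - (Tbeta β)^[i+1] x)
                + β ^ (-(i:ℤ)) * (Tbeta β)^[i] x) := by
                exact mul_le_mul_of_nonneg_left h1 (by positivity)
            _ = ((β * B) * β ^ (-((i:ℤ)+1))) * (1 - (Tbeta β)^[i+1] x)
                + ((β * B) * β ^ (-(i:ℤ))) * (Tbeta β)^[i] x := by ring
            _ = (1 - (Tbeta β)^[i+1] x) + β * (Tbeta β)^[i] x := by rw [h2, hC2]; ring
            _ = (eps β x i : ℝ) + 1 := by rw [hstep]; ring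
        -- conclude
        have : ⌈β * (Tbeta β)^[i] y⌉ = eps β x i + 1 := by
          rw [Int.ceil_eq_iff]
          constructor
          · push_cast; linarith
          · push_cast; linarith
        simp only [eps] at this ⊢
        omega
  refine ⟨⟨?_, ?_⟩, main n le_rfl⟩
  · have := Sn_nonneg hβ0 hx n; linarith
  · have h0 := hy2 0 (Nat.zero_le n)
    have hxn : x - Sn β x n = β ^ (-(n:ℤ)) * (Tbeta β)^[n] x := Sn_sub hβ0 x n
    simp only [Nat.cast_zero, neg_zero, zpow_zero, one_mul, Function.iterate_zero, id_eq] at h0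
    linarith

lemma one_mem_Ioc : (1:ℝ) ∈ Ioc (0:ℝ) 1 := ⟨one_pos, le_refl 1⟩

lemma tseq_lt {β : ℝ} (hβ : 1 < β) (q : ℕ) :
    β ^ (-(tseq β q : ℤ) - 1) < (Tbeta β)^[q] 1 := by
  have hβ0 : (0:ℝ) < β := lt_trans one_pos hβ
  set w := (Tbeta β)^[q] 1 with hw
  have hwm : w ∈ Ioc (0:ℝ) 1 := iter_mem β one_mem_Ioc q
  have hzero : ∀ κ, (∀ j < κ, eps β 1 (q + j) = 0) → (Tbeta β)^[q + κ] 1 = β ^ κ * w := by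
    intro κ
    induction κ with
    | zero => intro _; simp [hw]
    | succ κ ih =>
      intro hz
      have h1 : (Tbeta β)^[q + κ + 1] 1 = β * (Tbeta β)^[q + κ] 1 - (eps β 1 (q + κ) : ℝ) :=
        Tbeta_step β 1 (q + κ)
      have h2 : eps β 1 (q + κ) = 0 := hz κ (Nat.lt_succ_self κ)
      have h3 := ih (fun j hj => hz j (Nat.lt_succ_of_lt hj))
      rw [show q + (κ + 1) = q + κ + 1 by ring, h1, h3, h2]
      push_cast; ring
  have hbdd : BddAbove {k : ℕ | ∀ j < k, eps β 1 (q + j) = 0} := by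
    refine ⟨⌈(1 / w - 1) / (β - 1)⌉₊, ?_⟩
    intro κ hκ
    have h1 : β ^ κ * w ≤ 1 := by rw [← hzero κ hκ]; exact (iter_mem β one_mem_Ioc _).2
    have h2 : 1 + (κ : ℝ) * (β - 1) ≤ β ^ κ := by
      have := one_add_mul_le_pow (a := β - 1) (by linarith) κ
      simpa using this
    have h3 : β ^ κ ≤ 1 / w := by
      rw [le_div_iff₀ hwm.1]
      exact h1
    have h4 : (κ : ℝ) ≤ (1 / w - 1) / (β - 1) := by
      rw [le_div_iff₀ (by linarith : (0:ℝ) < β - 1)]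
      linarith
    exact_mod_cast h4.trans (Nat.le_ceil _)
  set t := tseq β q with ht
  have htmem : ∀ j < t, eps β 1 (q + j) = 0 :=
    Nat.sSup_mem ⟨0, by simp⟩ hbdd
  have htnot : ¬ (∀ j < t + 1, eps β 1 (q + j) = 0) := by
    intro hmem
    have h2 : t + 1 ≤ t := le_csSup hbdd hmem
    omega
  have hne : eps β 1 (q + t) ≠ 0 := by
    intro h
    exact htnot (fun j hj => by rcases Nat.lt_or_ge j t with h' | h'
                                · exact htmem j h'
                                · have : j = t := by omega
                                  rw [this]; exact h)
  have hpos : 1 ≤ eps β 1 (q + t) := by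
    have := eps_nonneg hβ0 one_mem_Ioc (q + t)
    omega
  -- β * T^[q+t] 1 > 1
  have hTt : (Tbeta β)^[q + t] 1 = β ^ t * w := hzero t htmem
  have hceil : (2:ℤ) ≤ ⌈β * (Tbeta β)^[q + t] 1⌉ := by
    simp only [eps] at hpos; omega
  have hgt : 1 < β * (Tbeta β)^[q + t] 1 := by
    have h := Int.ceil_lt_add_one (β * (Tbeta β)^[q + t] 1)
    have : (2:ℝ) ≤ (⌈β * (Tbeta β)^[q + t] 1⌉ : ℝ) := by exact_mod_cast hceil
    linarith
  rw [hTt] at hgt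
  -- 1 < β^(t+1) * w, so β^(-(t:ℤ)-1) < w
  have hp : (0:ℝ) < β ^ ((t:ℤ) + 1) := zpow_pos hβ0 _
  have hconv : β * β ^ t = β ^ ((t:ℤ) + 1) := by
    rw [zpow_add₀ hβ0.ne', zpow_one, zpow_natCast]; ring
  rw [show -(t:ℤ) - 1 = -((t:ℤ)+1) by ring, zpow_neg]
  rw [inv_lt_iff_one_lt_mul₀ hp, mul_comm]
  calc (1:ℝ) < β * β ^ t * w := by linarith [hgt]
    _ = β ^ ((t:ℤ)+1) * w := by rw [hconv]

lemma chain {β x : ℝ} (hβ : 1 < β) (hx : x ∈ Ioc (0:ℝ) 1) (n : ℕ) :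
    ∀ m ≤ n, β ^ (-(n:ℤ)) * (Tbeta β)^[n - kstar β x n] 1
      ≤ β ^ (-(m:ℤ)) * (1 - (Tbeta β)^[m] x) + β ^ (-(n:ℤ)) * (Tbeta β)^[n] x := by
  have hβ0 : (0:ℝ) < β := lt_trans one_pos hβ
  have hne0 : β ≠ 0 := hβ0.ne'
  set k := kstar β x n with hkdef
  have hnmem : n ∈ {k : ℕ | ∀ i < n - k, eps β x (k + i) = eps β 1 i} := by
    intro i hi; omega
  have hkmem : ∀ i < n - k, eps β x (k + i) = eps β 1 i :=
    Nat.sInf_mem (⟨n, hnmem⟩ : Set.Nonempty _)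
  have hkle : k ≤ n := Nat.sInf_le hnmem
  have hkmin : ∀ m < k, ∃ i, i < n - m ∧ eps β x (m + i) ≠ eps β 1 i := by
    intro m hm
    by_contra hcon
    push_neg at hcon
    have : m ∈ {k : ℕ | ∀ i < n - k, eps β x (k + i) = eps β 1 i} :=
      fun i hi => hcon i hi
    have hsm : k ≤ m := Nat.sInf_le this
    omega
  -- Case m ≥ k
  have caseA : ∀ m, k ≤ m → m ≤ n →
      β ^ (-(n:ℤ)) * (Tbeta β)^[n - k] 1
        ≤ β ^ (-(m:ℤ)) * (1 - (Tbeta β)^[m] x) + β ^ (-(n:ℤ)) * (Tbeta β)^[n] x := by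
    intro m hkm hmn
    have hmatch : ∀ i < n - m, eps β ((Tbeta β)^[m] x) i = eps β ((Tbeta β)^[m-k] 1) i := by
      intro i hi
      rw [← eps_shift β x m i, ← eps_shift β 1 (m-k) i]
      rw [show m + i = k + ((m - k) + i) by omega]
      exact hkmem ((m-k)+i) (by omega)
    have hS : Sn β ((Tbeta β)^[m] x) (n-m) = Sn β ((Tbeta β)^[m-k] 1) (n-m) := Sn_congr hmatch
    have e1 : (Tbeta β)^[n-m] ((Tbeta β)^[m] x)
        = β ^ ((n-m : ℕ):ℤ) * ((Tbeta β)^[m] x - Sn β ((Tbeta β)^[m] x) (n-m)) :=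
      iter_eq hβ0 _ _
    have e2 : (Tbeta β)^[n-m] ((Tbeta β)^[m-k] 1)
        = β ^ ((n-m : ℕ):ℤ) * ((Tbeta β)^[m-k] 1 - Sn β ((Tbeta β)^[m-k] 1) (n-m)) :=
      iter_eq hβ0 _ _
    rw [← Function.iterate_add_apply, Nat.sub_add_cancel hmn] at e1
    rw [← Function.iterate_add_apply, show (n-m)+(m-k) = n - k by omega] at e2
    have hrel : (Tbeta β)^[n] x - (Tbeta β)^[n-k] 1
        = β ^ ((n-m : ℕ):ℤ) * ((Tbeta β)^[m] x - (Tbeta β)^[m-k] 1) := by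
      rw [e1, e2, hS]; ring
    have hprod : β ^ (-(n:ℤ)) * β ^ ((n-m : ℕ):ℤ) = β ^ (-(m:ℤ)) := by
      rw [← zpow_add₀ hne0, Nat.cast_sub hmn]
      ring_nf
    have h1m : (Tbeta β)^[m - k] 1 ≤ 1 := (iter_mem β one_mem_Ioc _).2
    have hmpos : (0:ℝ) < β ^ (-(m:ℤ)) := zpow_pos hβ0 _
    have key2 : β ^ (-(m:ℤ)) * (1 - (Tbeta β)^[m] x) + β ^ (-(n:ℤ)) * (Tbeta β)^[n] x
        = β ^ (-(m:ℤ)) * (1 - (Tbeta β)^[m-k] 1) + β ^ (-(n:ℤ)) * (Tbeta β)^[n-k] 1 := by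
      linear_combination β ^ (-(n:ℤ)) * hrel
        + ((Tbeta β)^[m] x - (Tbeta β)^[m-k] 1) * hprod
    rw [key2]
    nlinarith [mul_nonneg hmpos.le (by linarith : (0:ℝ) ≤ 1 - (Tbeta β)^[m-k] 1)]
  -- induction on n - m
  have key : ∀ d m, m ≤ n → n - m ≤ d →
      β ^ (-(n:ℤ)) * (Tbeta β)^[n - k] 1
        ≤ β ^ (-(m:ℤ)) * (1 - (Tbeta β)^[m] x) + β ^ (-(n:ℤ)) * (Tbeta β)^[n] x := by
    intro d
    induction d with
    | zero =>
      intro m hmn hd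
      have : m = n := by omega
      exact this ▸ caseA n (by omega) le_rfl
    | succ d ih =>
      intro m hmn hd
      rcases Nat.lt_or_ge m k with hmk | hmk
      · -- m < k : descend
        obtain ⟨i0, hi0, hne0'⟩ := hkmin m hmk
        -- minimal differing index
        have hex : ∃ j, j < n - m ∧ eps β x (m + j) ≠ eps β 1 j := ⟨i0, hi0, hne0'⟩
        classical
        set j := Nat.find hex with hj
        obtain ⟨hjlt, hjne⟩ := Nat.find_spec hex
        have hjmin : ∀ i < j, eps β x (m + i) = eps β 1 i := by
          intro i hi
          have := Nat.find_min hex hi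
          push_neg at this
          exact this (by omega)
        set p := m + j + 1 with hp
        have hpn : p ≤ n := by omega
        -- digits of T^m x and 1 agree below j
        have hagree : ∀ i < j, eps β ((Tbeta β)^[m] x) i = eps β 1 i := by
          intro i hi
          rw [← eps_shift β x m i]
          exact hjmin i hi
        have hS : Sn β ((Tbeta β)^[m] x) j = Sn β 1 j := Sn_congr hagree
        have e1 : (Tbeta β)^[j] ((Tbeta β)^[m] x)
            = β ^ (j:ℤ) * ((Tbeta β)^[m] x - Sn β ((Tbeta β)^[m] x) j) := iter_eq hβ0 _ _
        have e2 : (Tbeta β)^[j] 1 = β ^ (j:ℤ) * (1 - Sn β 1 j) := iter_eq hβ0 _ _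
        set u := (Tbeta β)^[j] ((Tbeta β)^[m] x) with hu
        set v := (Tbeta β)^[j] 1 with hv
        have hvu : v - u = β ^ (j:ℤ) * (1 - (Tbeta β)^[m] x) := by
          rw [e1, e2, hS]; ring
        have hxm1 : (Tbeta β)^[m] x ≤ 1 := (iter_mem β hx m).2
        have hule : u ≤ v := by
          have : 0 ≤ β ^ (j:ℤ) * (1 - (Tbeta β)^[m] x) :=
            mul_nonneg (zpow_pos hβ0 _).le (by linarith)
          linarith [hvu]
        -- digit comparison
        have humj : (Tbeta β)^[m + j] x = u := by
          rw [hu, ← Function.iterate_add_apply, Nat.add_comm j m]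
        have heu : eps β x (m + j) = ⌈β * u⌉ - 1 := by
          rw [eps, humj]
        have hev : eps β 1 j = ⌈β * v⌉ - 1 := by rw [eps]
        have hceil_le : ⌈β * u⌉ ≤ ⌈β * v⌉ :=
          Int.ceil_le_ceil (by nlinarith)
        have heuv : eps β x (m + j) + 1 ≤ eps β 1 j := by
          rw [heu, hev] at hjne ⊢
          omega
        have hvgt : ((eps β 1 j : ℤ) : ℝ) < β * v := by
          have h1 : (⌈β * v⌉ : ℝ) < β * v + 1 := Int.ceil_lt_add_one _
          rw [hev]
          push_cast
          linarith
        -- T^p x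
        have hTp : (Tbeta β)^[p] x = β * u - (eps β x (m + j) : ℝ) := by
          rw [hp, show m + j + 1 = (m + j) + 1 by rfl, Tbeta_step, humj]
        have h4 : 1 - (Tbeta β)^[p] x ≤ β ^ ((j:ℤ) + 1) * (1 - (Tbeta β)^[m] x) := by
          have hcast : ((eps β x (m + j) : ℤ) : ℝ) + 1 ≤ ((eps β 1 j : ℤ) : ℝ) := by
            exact_mod_cast heuv
          have hbv : β ^ ((j:ℤ)+1) * (1 - (Tbeta β)^[m] x) = β * (v - u) := by
            rw [hvu, zpow_add₀ hne0, zpow_one]; ring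
          rw [hTp, hbv]
          linarith
        have hppos : (0:ℝ) < β ^ (-(p:ℤ)) := zpow_pos hβ0 _
        have h3 : β ^ (-(p:ℤ)) * β ^ ((j:ℤ)+1) = β ^ (-(m:ℤ)) := by
          rw [← zpow_add₀ hne0, hp]
          push_cast
          ring_nf
        have hdesc : β ^ (-(p:ℤ)) * (1 - (Tbeta β)^[p] x)
            ≤ β ^ (-(m:ℤ)) * (1 - (Tbeta β)^[m] x) := by
          calc β ^ (-(p:ℤ)) * (1 - (Tbeta β)^[p] x)
              ≤ β ^ (-(p:ℤ)) * (β ^ ((j:ℤ)+1) * (1 - (Tbeta β)^[m] x)) :=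
                mul_le_mul_of_nonneg_left h4 hppos.le
            _ = β ^ (-(m:ℤ)) * (1 - (Tbeta β)^[m] x) := by rw [← mul_assoc, h3]
        have hih := ih p hpn (by omega)
        linarith
      · exact caseA m hmk hmn
  intro m hmn
  exact key (n - m) m hmn le_rfl

/-- For every `x ∈ (0,1]` and every `n ≥ 1`,
`|I_n(x)| ≥ β^{−(n + t_{n − k_n^*(x)} + 1)}`. -/
theorem len_In_lower_bound (β : ℝ) (hβ : 1 < β) (x : ℝ) (hx : x ∈ Ioc (0:ℝ) 1)
    (n : ℕ) (hn : 1 ≤ n) :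
    β ^ (-((n : ℤ) + (tseq β (n - kstar β x n) : ℤ) + 1)) ≤ len (In β x n) := by
  have hβ0 : (0:ℝ) < β := lt_trans one_pos hβ
  set k := kstar β x n with hk
  set t := tseq β (n - k) with ht
  set δ := β ^ (-((n : ℤ) + (t : ℤ) + 1)) with hδdef
  have hδpos : 0 < δ := zpow_pos hβ0 _
  have hnpos : (0:ℝ) < β ^ (-(n:ℤ)) := zpow_pos hβ0 _
  have hδle : δ ≤ β ^ (-(n:ℤ)) * (Tbeta β)^[n - k] 1 := by
    have h1 := tseq_lt hβ (n - k)
    have h2 : δ = β ^ (-(n:ℤ)) * β ^ (-(t:ℤ) - 1) := by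
      rw [hδdef, ← zpow_add₀ hβ0.ne']; ring_nf
    rw [h2]
    exact mul_le_mul_of_nonneg_left h1.le hnpos.le
  set c := Sn β x n with hc
  have hsub : Ioc c (c + δ) ⊆ In β x n := by
    intro y hy
    have h := match_digits hβ hx n hy.1 (fun m hm => by
      have hch := chain hβ hx n m hm
      have hyc : y - c ≤ δ := by linarith [hy.2]
      linarith [hδle])
    exact ⟨h.1, h.2⟩
  have h1 : ENNReal.ofReal δ ≤ volume (In β x n) := by
    have hvol : volume (Ioc c (c + δ)) = ENNReal.ofReal δ := by
      rw [Real.volume_Ioc]; congr 1; ring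
    rw [← hvol]; exact measure_mono hsub
  have h2 : volume (In β x n) ≠ ⊤ := by
    have hInsub : In β x n ⊆ Ioc (0:ℝ) 1 := fun y hy => hy.1
    exact ne_top_of_le_ne_top (by simp [Real.volume_Ioc]) (measure_mono hInsub)
  have hfin := ENNReal.toReal_mono h2 h1
  rw [ENNReal.toReal_ofReal hδpos.le] at hfin
  simpa [len] using hfin
end
end

section
/- Let k ≥ 1 be an integer and let (ε_1,…,ε_n) be an admissible word such that the basic interval I(ε_1,…,ε_n) is full. Then x_0 := ε_1/β + ⋯ + ε_n/β^n + ε*_1/β^{n+1} + ⋯ + ε*_k/β^{n+k} + 1/β^{n+k+t_k+1} is the right endpoint (i.e. the maximum) of the basic interval I(ε_1,…,ε_n, ε*_1,…,ε*_k, 0^{t_k+1}), and x_0 lies in the interior of I(ε_1,…,ε_n). -/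
open MeasureTheory Filter Set

noncomputable section

lemma Tbeta_mem_Ioc (β x : ℝ) : Tbeta β x ∈ Set.Ioc (0:ℝ) 1 := by
  have h1 := Int.ceil_lt_add_one (β * x)
  have h2 := Int.le_ceil (β * x)
  constructor <;> [skip; skip] <;> unfold Tbeta <;> linarith

lemma iter_mem_Ioc {β x : ℝ} (hx : x ∈ Set.Ioc (0:ℝ) 1) (j : ℕ) :
    (Tbeta β)^[j] x ∈ Set.Ioc (0:ℝ) 1 := by
  cases j with
  | zero => exact hx
  | succ j => rw [Function.iterate_succ_apply']; exact Tbeta_mem_Ioc β _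

lemma iter_eps (β x : ℝ) (j : ℕ) :
    (Tbeta β)^[j+1] x = β * (Tbeta β)^[j] x - eps β x j := by
  rw [Function.iterate_succ_apply', Tbeta, eps]; push_cast; ring

lemma eps_nonneg_s12 {β x : ℝ} (hβ : 0 < β) (hx : x ∈ Set.Ioc (0:ℝ) 1) (j : ℕ) :
    0 ≤ eps β x j := by
  have h : (0:ℝ) < β * (Tbeta β)^[j] x := mul_pos hβ (iter_mem_Ioc hx j).1
  have := Int.ceil_pos.mpr h
  unfold eps; omega

/-- partial sums of a digit sequence -/
def prefD (β : ℝ) (d : ℕ → ℤ) (j : ℕ) : ℝ := ∑ i ∈ Finset.range j, (d i : ℝ) / β ^ (i+1)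

lemma prefD_zero (β : ℝ) (d : ℕ → ℤ) : prefD β d 0 = 0 := by simp [prefD]

lemma prefD_succ (β : ℝ) (d : ℕ → ℤ) (j : ℕ) :
    prefD β d (j+1) = prefD β d j + (d j : ℝ) / β ^ (j+1) := Finset.sum_range_succ _ _

lemma prefD_congr {β : ℝ} {d d' : ℕ → ℤ} {j : ℕ} (h : ∀ i < j, d i = d' i) :
    prefD β d j = prefD β d' j := by
  unfold prefD
  exact Finset.sum_congr rfl (fun i hi => by rw [h i (Finset.mem_range.mp hi)])

lemma prefD_mono {β : ℝ} (hβ : 1 < β) {d : ℕ → ℤ} (hd : ∀ i, 0 ≤ d i) {i j : ℕ}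
    (hij : i ≤ j) : prefD β d i ≤ prefD β d j := by
  unfold prefD
  apply Finset.sum_le_sum_of_subset_of_nonneg (Finset.range_subset_range.mpr hij)
  intro m _ _
  exact div_nonneg (by exact_mod_cast hd m) (pow_nonneg (by linarith) _)

lemma prefD_nonneg {β : ℝ} (hβ : 1 < β) {d : ℕ → ℤ} (hd : ∀ i, 0 ≤ d i) (j : ℕ) :
    0 ≤ prefD β d j := by
  rw [← prefD_zero β d]; exact prefD_mono hβ hd (Nat.zero_le j)

/-- expansion formula: `T^j y = β^j (y - prefD (eps y) j)` -/
lemma expand {β : ℝ} (hβ : 0 < β) (y : ℝ) (j : ℕ) :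
    (Tbeta β)^[j] y = β ^ j * (y - prefD β (eps β y) j) := by
  induction j with
  | zero => simp [prefD_zero]
  | succ j ih =>
    rw [iter_eps, ih, prefD_succ]
    have h0 : β ≠ 0 := ne_of_gt hβ
    field_simp
    ring
/-- forward: digits up to N determine the telescoping formula -/
lemma bounds_of_digits {β : ℝ} (hβ : 1 < β) {d : ℕ → ℤ} {x : ℝ} {N : ℕ}
    (hx : x ∈ Set.Ioc (0:ℝ) 1) (hd : ∀ i < N, eps β x i = d i) :
    ∀ j ≤ N, β ^ j * (x - prefD β d j) ∈ Set.Ioc (0:ℝ) 1 := by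
  intro j hj
  have h1 : prefD β (eps β x) j = prefD β d j :=
    prefD_congr (fun i hi => hd i (lt_of_lt_of_le hi hj))
  have h2 := expand (by linarith : (0:ℝ) < β) x j
  rw [h1] at h2
  rw [← h2]
  exact iter_mem_Ioc hx j

/-- backward: bounds on partial remainders force the digits -/
lemma digits_of_bounds {β : ℝ} (hβ : 1 < β) {d : ℕ → ℤ} {x : ℝ} {N : ℕ}
    (h : ∀ j ≤ N, β ^ j * (x - prefD β d j) ∈ Set.Ioc (0:ℝ) 1) :
    ∀ j ≤ N, (∀ i < j, eps β x i = d i) ∧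
      (Tbeta β)^[j] x = β ^ j * (x - prefD β d j) := by
  have hβ0 : (0:ℝ) < β := by linarith
  intro j
  induction j with
  | zero => exact fun _ => ⟨fun i hi => absurd hi (Nat.not_lt_zero i), by simp [prefD_zero]⟩
  | succ j ih =>
    intro hj
    obtain ⟨hdj, hT⟩ := ih (le_of_lt (Nat.lt_of_succ_le hj))
    obtain ⟨hb1, hb2⟩ := h (j+1) hj
    have key : β * ((Tbeta β)^[j] x) = β ^ (j+1) * (x - prefD β d (j+1)) + d j := by
      rw [hT, prefD_succ]
      have h0 : β ≠ 0 := ne_of_gt hβ0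
      field_simp
      ring
    have hceil : ⌈β * ((Tbeta β)^[j] x)⌉ = d j + 1 := by
      rw [key, Int.ceil_eq_iff]
      push_cast
      constructor <;> linarith
    have hepsj : eps β x j = d j := by rw [eps, hceil]; ring
    refine ⟨fun i hi => ?_, ?_⟩
    · rcases Nat.lt_or_ge i j with h' | h'
      · exact hdj i h'
      · have : i = j := by omega
        rw [this]; exact hepsj
    · rw [iter_eps, hT, hepsj, prefD_succ]
      have h0 : β ≠ 0 := ne_of_gt hβ0
      field_simp
      ring

lemma mem_cyl_iff {β : ℝ} (hβ : 1 < β) (w : List ℤ) (x : ℝ) :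
    x ∈ cyl β w ↔
      ∀ j ≤ w.length, β ^ j * (x - prefD β (fun i => w.getD i 0) j) ∈ Set.Ioc (0:ℝ) 1 := by
  constructor
  · rintro ⟨hx, hd⟩
    exact bounds_of_digits hβ hx hd
  · intro h
    have hx : x ∈ Set.Ioc (0:ℝ) 1 := by
      have := (h 0 (Nat.zero_le _))
      simpa [prefD_zero] using this
    exact ⟨hx, (digits_of_bounds hβ h w.length le_rfl).1⟩
lemma cyl_digit_nonneg {β : ℝ} (hβ : 1 < β) {w : List ℤ} (hadm : Admissible β w) :
    ∀ i, 0 ≤ w.getD i 0 := by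
  obtain ⟨y, hy, hd⟩ := hadm
  intro i
  rcases Nat.lt_or_ge i w.length with h | h
  · rw [← hd i h]; exact eps_nonneg_s12 (by linarith) hy i
  · rw [List.getD_eq_default _ _ h]

/-- Characterization of a full cylinder as a half-open interval. -/
lemma full_char {β : ℝ} (hβ : 1 < β) {w : List ℤ} (hadm : Admissible β w)
    (hfull : IsFull β w) :
    cyl β w = Set.Ioc (prefD β (fun i => w.getD i 0) w.length)
      (prefD β (fun i => w.getD i 0) w.length + (β ^ w.length)⁻¹) := by
  have hβ0 : (0:ℝ) < β := by linarith
  set n := w.length with hn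
  set d : ℕ → ℤ := fun i => w.getD i 0 with hdd
  set a := prefD β d n with ha
  have hdn : ∀ i, 0 ≤ d i := cyl_digit_nonneg hβ hadm
  -- cyl ⊆ Ioc a (a + β⁻ⁿ)
  have hsub : cyl β w ⊆ Set.Ioc a (a + (β ^ n)⁻¹) := by
    intro y hy
    have h := (mem_cyl_iff hβ w y).mp hy n le_rfl
    have hp : (0:ℝ) < β ^ n := pow_pos hβ0 n
    have hinv : β ^ n * (β ^ n)⁻¹ = 1 := mul_inv_cancel₀ (ne_of_gt hp)
    constructor
    · nlinarith [h.1]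
    · nlinarith [h.2]
  have hbdd : BddAbove (cyl β w) := ⟨a + (β ^ n)⁻¹, fun y hy => (hsub hy).2⟩
  set b := sSup (cyl β w) with hb
  have hble : b ≤ a + (β ^ n)⁻¹ := csSup_le hadm (fun y hy => (hsub hy).2)
  have hab : a < b := by
    obtain ⟨y, hy⟩ := hadm
    exact lt_of_lt_of_le (hsub hy).1 (le_csSup hbdd hy)
  -- downward closure
  have hdown : Set.Ioo a b ⊆ cyl β w := by
    intro z hz
    obtain ⟨y, hy, hzy⟩ := exists_lt_of_lt_csSup hadm hz.2
    rw [mem_cyl_iff hβ]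
    intro j hj
    have hyb := (mem_cyl_iff hβ w y).mp hy j hj
    have hp : (0:ℝ) < β ^ j := pow_pos hβ0 j
    have hpa : prefD β d j ≤ a := prefD_mono hβ hdn hj
    constructor
    · have : prefD β d j < z := lt_of_le_of_lt hpa hz.1
      nlinarith
    · have : z ≤ y := le_of_lt hzy
      nlinarith [hyb.2]
  -- cyl ⊆ Ioc a b
  have hsub2 : cyl β w ⊆ Set.Ioc a b := fun y hy => ⟨(hsub hy).1, le_csSup hbdd hy⟩
  -- measure computation
  have hvol : volume (cyl β w) = ENNReal.ofReal (b - a) := by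
    apply le_antisymm
    · calc volume (cyl β w) ≤ volume (Set.Ioc a b) := measure_mono hsub2
        _ = ENNReal.ofReal (b - a) := Real.volume_Ioc
    · calc ENNReal.ofReal (b - a) = volume (Set.Ioo a b) := Real.volume_Ioo.symm
        _ ≤ volume (cyl β w) := measure_mono hdown
  have hlen : len (cyl β w) = b - a := by
    rw [len, hvol, ENNReal.toReal_ofReal (by linarith)]
  have hbeq : b = a + (β ^ n)⁻¹ := by
    have h1 : (β:ℝ) ^ (-(n:ℤ)) = (β ^ n)⁻¹ := by
      rw [zpow_neg, zpow_natCast]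
    have := hfull
    rw [IsFull, hlen, ← hn, h1] at this
    linarith
  -- b ∈ cyl
  have hbmem : b ∈ cyl β w := by
    rw [mem_cyl_iff hβ]
    intro j hj
    have hp : (0:ℝ) < β ^ j := pow_pos hβ0 j
    have hpa : prefD β d j ≤ a := prefD_mono hβ hdn hj
    constructor
    · have : (0:ℝ) < (β ^ n)⁻¹ := by positivity
      nlinarith
    · have hub : b ≤ prefD β d j + (β ^ j)⁻¹ := by
        apply csSup_le hadm
        intro y hy
        have hyb := (mem_cyl_iff hβ w y).mp hy j hj
        have hinvj : β ^ j * (β ^ j)⁻¹ = 1 := mul_inv_cancel₀ (ne_of_gt hp)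
        nlinarith [hyb.2]
      have hinvj : β ^ j * (β ^ j)⁻¹ = 1 := mul_inv_cancel₀ (ne_of_gt hp)
      nlinarith
  -- conclusion
  apply Set.Subset.antisymm
  · rw [← hbeq]; exact hsub2
  · intro z hz
    rcases eq_or_lt_of_le hz.2 with h | h
    · rw [← hbeq] at h; rw [h]; exact hbmem
    · exact hdown ⟨hz.1, by rw [hbeq]; exact h⟩
lemma iter_zero_block {β : ℝ} {k m : ℕ} (h : ∀ j < m, eps β 1 (k + j) = 0) :
    (Tbeta β)^[k + m] 1 = β ^ m * (Tbeta β)^[k] 1 := by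
  induction m with
  | zero => simp
  | succ m ih =>
    have hkm : k + (m + 1) = (k + m) + 1 := rfl
    rw [hkm, iter_eps, h m (Nat.lt_succ_self m), ih (fun j hj => h j (by omega))]
    push_cast; ring

lemma tseq_spec {β : ℝ} (hβ : 1 < β) (k : ℕ) :
    (∀ j < tseq β k, eps β 1 (k + j) = 0) ∧ eps β 1 (k + tseq β k) ≠ 0 := by
  have h1 : (1:ℝ) ∈ Set.Ioc (0:ℝ) 1 := ⟨one_pos, le_rfl⟩
  have hTk : 0 < (Tbeta β)^[k] 1 := (iter_mem_Ioc h1 k).1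
  obtain ⟨M, hM⟩ := pow_unbounded_of_one_lt ((Tbeta β)^[k] 1)⁻¹ hβ
  have hbdd : BddAbove {m : ℕ | ∀ j < m, eps β 1 (k + j) = 0} := by
    refine ⟨M, fun m hm => ?_⟩
    by_contra hc
    push_neg at hc
    have hiter := iter_zero_block hm
    have hle : β ^ m * (Tbeta β)^[k] 1 ≤ 1 := by
      rw [← hiter]; exact (iter_mem_Ioc h1 _).2
    have hMm : β ^ M ≤ β ^ m := pow_le_pow_right₀ (by linarith) (le_of_lt hc)
    have hinv : ((Tbeta β)^[k] 1)⁻¹ * (Tbeta β)^[k] 1 = 1 :=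
      inv_mul_cancel₀ (ne_of_gt hTk)
    nlinarith
  have h0 : 0 ∈ {m : ℕ | ∀ j < m, eps β 1 (k + j) = 0} :=
    fun j hj => absurd hj (Nat.not_lt_zero j)
  have hmem : tseq β k ∈ {m : ℕ | ∀ j < m, eps β 1 (k + j) = 0} :=
    Nat.sSup_mem ⟨0, h0⟩ hbdd
  refine ⟨hmem, ?_⟩
  intro hzero
  have hsucc : tseq β k + 1 ∈ {m : ℕ | ∀ j < m, eps β 1 (k + j) = 0} := by
    intro j hj
    rcases Nat.lt_or_ge j (tseq β k) with h' | h'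
    · exact hmem j h'
    · have : j = tseq β k := by omega
      rw [this]; exact hzero
  have := le_csSup hbdd hsucc
  rw [← tseq] at this
  omega

lemma Tk_gt {β : ℝ} (hβ : 1 < β) (k : ℕ) :
    (β ^ (tseq β k + 1))⁻¹ < (Tbeta β)^[k] 1 := by
  obtain ⟨hz, hnz⟩ := tseq_spec hβ k
  have h1 : (1:ℝ) ∈ Set.Ioc (0:ℝ) 1 := ⟨one_pos, le_rfl⟩
  have hiter : (Tbeta β)^[k + tseq β k] 1 = β ^ tseq β k * (Tbeta β)^[k] 1 :=
    iter_zero_block hz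
  have hnn : 0 ≤ eps β 1 (k + tseq β k) := eps_nonneg_s12 (by linarith) h1 _
  have hceil : 2 ≤ ⌈β * (Tbeta β)^[k + tseq β k] 1⌉ := by
    unfold eps at hnz hnn; omega
  have hgt : 1 < β * (Tbeta β)^[k + tseq β k] 1 := by
    by_contra hc
    push_neg at hc
    have : ⌈β * (Tbeta β)^[k + tseq β k] 1⌉ ≤ 1 := Int.ceil_le.mpr (by exact_mod_cast hc)
    omega
  rw [hiter] at hgt
  have hp : (0:ℝ) < β ^ (tseq β k + 1) := pow_pos (by linarith) _
  have hinv : (β ^ (tseq β k + 1))⁻¹ * β ^ (tseq β k + 1) = 1 := inv_mul_cancel₀ (ne_of_gt hp)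
  have hinvpos : (0:ℝ) < (β ^ (tseq β k + 1))⁻¹ := by positivity
  have hps : β ^ (tseq β k + 1) = β ^ tseq β k * β := pow_succ β _
  nlinarith [(iter_mem_Ioc (β:=β) h1 k).1]
lemma inv_pow_le_inv_pow {β : ℝ} (hβ : 1 < β) {i j : ℕ} (h : i ≤ j) :
    (β ^ j)⁻¹ ≤ (β ^ i)⁻¹ := by
  have h1 : (0:ℝ) < β ^ i := pow_pos (by linarith) i
  have h2 : β ^ i ≤ β ^ j := pow_le_pow_right₀ (by linarith) h
  exact inv_anti₀ h1 h2

/-- The digit function of the concatenated word. -/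
def digF (β : ℝ) (w : List ℤ) (k : ℕ) (i : ℕ) : ℤ :=
  if i < w.length then w.getD i 0 else if i < w.length + k then eps β 1 (i - w.length) else 0

lemma estar_getD (β : ℝ) {k j : ℕ} (h : j < k) : (estarWord β k).getD j 0 = eps β 1 j := by
  have hl : j < (estarWord β k).length := by simpa [estarWord] using h
  rw [List.getD_eq_getElem _ _ hl]
  simp [estarWord]

lemma word_getD (β : ℝ) (w : List ℤ) (k m i : ℕ) :
    (w ++ estarWord β k ++ List.replicate m 0).getD i 0 = digF β w k i := by
  have hle : (estarWord β k).length = k := by simp [estarWord]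
  have hl1 : (w ++ estarWord β k).length = w.length + k := by
    rw [List.length_append, hle]
  unfold digF
  by_cases h1 : i < w.length
  · rw [if_pos h1, List.getD_append _ _ _ _ (by omega), List.getD_append _ _ _ _ h1]
  · rw [if_neg h1]
    by_cases h2 : i < w.length + k
    · rw [if_pos h2, List.getD_append _ _ _ _ (by omega),
        List.getD_append_right _ _ _ _ (by omega), estar_getD β (by omega)]
    · rw [if_neg h2, List.getD_append_right _ _ _ _ (by omega)]
      rcases Nat.lt_or_ge (i - (w ++ estarWord β k).length) m with h3 | h3
      · rw [List.getD_eq_getElem _ _ (by simpa using h3)]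
        simp
      · rw [List.getD_eq_default _ _ (by simpa using h3)]

lemma word_length (β : ℝ) (w : List ℤ) (k m : ℕ) :
    (w ++ estarWord β k ++ List.replicate m 0).length = w.length + k + m := by
  simp [estarWord]
  omega

lemma prefD_add (β : ℝ) (d : ℕ → ℤ) (a b : ℕ) :
    prefD β d (a + b) = prefD β d a + prefD β (fun i => d (a + i)) b / β ^ a := by
  unfold prefD
  rw [Finset.sum_range_add, Finset.sum_div]
  congr 1
  refine Finset.sum_congr rfl fun i _ => ?_
  rw [div_div, ← pow_add]
  congr 2
  omega

lemma digF_nonneg {β : ℝ} (hβ : 1 < β) {w : List ℤ} (hadm : Admissible β w) (k : ℕ) :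
    ∀ i, 0 ≤ digF β w k i := by
  intro i
  unfold digF
  split_ifs with h1 h2
  · exact cyl_digit_nonneg hβ hadm i
  · exact eps_nonneg_s12 (by linarith) ⟨one_pos, le_rfl⟩ _
  · exact le_refl 0

lemma prefD_digF_low (β : ℝ) (w : List ℤ) (k : ℕ) {j : ℕ} (hj : j ≤ w.length) :
    prefD β (digF β w k) j = prefD β (fun i => w.getD i 0) j := by
  apply prefD_congr
  intro i hi
  unfold digF
  rw [if_pos (by omega)]

lemma prefD_digF_mid (β : ℝ) (w : List ℤ) (k : ℕ) {m : ℕ} (hm : m ≤ k) :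
    prefD β (digF β w k) (w.length + m) =
      prefD β (fun i => w.getD i 0) w.length + prefD β (eps β 1) m / β ^ w.length := by
  rw [prefD_add, prefD_digF_low β w k le_rfl]
  congr 2
  apply prefD_congr
  intro i hi
  unfold digF
  rw [if_neg (by omega), if_pos (by omega)]
  congr 1
  omega

lemma prefD_digF_high (β : ℝ) (w : List ℤ) (k : ℕ) {j : ℕ} (hj : w.length + k ≤ j) :
    prefD β (digF β w k) j = prefD β (digF β w k) (w.length + k) := by
  rw [show j = (w.length + k) + (j - (w.length + k)) by omega, prefD_add]
  have hz : prefD β (fun i => digF β w k (w.length + k + i)) (j - (w.length + k)) = 0 := by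
    unfold prefD
    apply Finset.sum_eq_zero
    intro i _
    have h0 : digF β w k (w.length + k + i) = 0 := by
      unfold digF
      rw [if_neg (by omega), if_neg (by omega)]
    simp only [h0]
    simp
  rw [hz]
  simp
lemma main_aux {β : ℝ} (hβ : 1 < β) (k : ℕ) (hk : 1 ≤ k) (w : List ℤ)
    (hadm : Admissible β w) (hfull : IsFull β w) :
    IsGreatest (cyl β (w ++ estarWord β k ++ List.replicate (tseq β k + 1) 0))
        (prefD β (fun i => w.getD i 0) w.length +
          (prefD β (eps β 1) k + (β ^ (k + tseq β k + 1))⁻¹) / β ^ w.length) ∧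
      (prefD β (fun i => w.getD i 0) w.length +
          (prefD β (eps β 1) k + (β ^ (k + tseq β k + 1))⁻¹) / β ^ w.length) ∈
        intIn01 (cyl β w) := by
  have hβ0 : (0:ℝ) < β := by linarith
  have h1m : (1:ℝ) ∈ Set.Ioc (0:ℝ) 1 := ⟨one_pos, le_rfl⟩
  have hpn : (0:ℝ) < β ^ w.length := pow_pos hβ0 _
  have hpk : (0:ℝ) < β ^ k := pow_pos hβ0 _
  have hpt : (0:ℝ) < β ^ (tseq β k + 1) := pow_pos hβ0 _
  have hpkt : (0:ℝ) < β ^ (k + tseq β k + 1) := pow_pos hβ0 _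
  have hpNN : (0:ℝ) < β ^ (w.length + k + tseq β k + 1) := pow_pos hβ0 _
  have hchar := full_char hβ hadm hfull
  -- facts about the expansion of 1
  have hTk01 := iter_mem_Ioc (β := β) h1m k
  have hTgt := Tk_gt hβ k
  have hsplit : (β ^ (k + tseq β k + 1))⁻¹ = (β ^ (tseq β k + 1))⁻¹ / β ^ k := by
    rw [div_eq_mul_inv, ← mul_inv, ← pow_add]
    congr 2
    omega
  have hdivTm : ∀ m : ℕ, (Tbeta β)^[m] 1 / β ^ m = 1 - prefD β (eps β 1) m := by
    intro m
    rw [expand hβ0 1 m]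
    exact mul_div_cancel_left₀ _ (ne_of_gt (pow_pos hβ0 m))
  have hdiv1 : (β ^ (k + tseq β k + 1))⁻¹ < (Tbeta β)^[k] 1 / β ^ k := by
    rw [hsplit]
    gcongr
  have hdivpos : (0:ℝ) < (Tbeta β)^[k] 1 / β ^ k := div_pos hTk01.1 hpk
  -- u := prefD β (eps β 1) k + (β ^ (k + tseq β k + 1))⁻¹  satisfies 0 < u < 1
  have hult : prefD β (eps β 1) k + (β ^ (k + tseq β k + 1))⁻¹ < 1 := by
    have := hdivTm k
    linarith
  have henn : ∀ i, (0:ℤ) ≤ eps β 1 i := fun i => eps_nonneg_s12 hβ0 h1m i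
  have hupos : 0 < prefD β (eps β 1) k + (β ^ (k + tseq β k + 1))⁻¹ := by
    have h1 : 0 ≤ prefD β (eps β 1) k := prefD_nonneg hβ henn k
    positivity
  -- the right endpoint of the full interval
  have hbmem : prefD β (fun i => w.getD i 0) w.length + (β ^ w.length)⁻¹ ∈ cyl β w := by
    rw [hchar]
    exact ⟨lt_add_of_pos_right _ (by positivity), le_rfl⟩
  have hbbd : ∀ j ≤ w.length,
      prefD β (fun i => w.getD i 0) w.length + (β ^ w.length)⁻¹ - prefD β (digF β w k) j
        ≤ (β ^ j)⁻¹ := by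
    intro j hj
    have hpj : (0:ℝ) < β ^ j := pow_pos hβ0 j
    have h := (mem_cyl_iff hβ w _).mp hbmem j hj
    rw [← prefD_digF_low β w k hj] at h
    nlinarith [h.2, hpj, mul_inv_cancel₀ (ne_of_gt hpj)]
  -- x0 ≤ right endpoint
  have hxvb : prefD β (fun i => w.getD i 0) w.length +
      (prefD β (eps β 1) k + (β ^ (k + tseq β k + 1))⁻¹) / β ^ w.length
        ≤ prefD β (fun i => w.getD i 0) w.length + (β ^ w.length)⁻¹ := by
    have h1 : (prefD β (eps β 1) k + (β ^ (k + tseq β k + 1))⁻¹) / β ^ w.length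
        ≤ 1 / β ^ w.length := by gcongr
    rw [one_div] at h1
    linarith
  -- x0 in terms of prefD digF
  have hmerge : ∀ A B : ℕ, ((β:ℝ) ^ A)⁻¹ / β ^ B = (β ^ (B + A))⁻¹ := by
    intro A B
    rw [div_eq_mul_inv, ← mul_inv, ← pow_add]
    congr 2
    omega
  have hxv_pref : prefD β (fun i => w.getD i 0) w.length +
      (prefD β (eps β 1) k + (β ^ (k + tseq β k + 1))⁻¹) / β ^ w.length
      = prefD β (digF β w k) (w.length + k + tseq β k + 1)
        + (β ^ (w.length + k + tseq β k + 1))⁻¹ := by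
    rw [prefD_digF_high β w k (by omega), prefD_digF_mid β w k le_rfl]
    rw [add_div, hmerge (k + tseq β k + 1) w.length]
    ring
  -- the master bound
  have hB : ∀ j ≤ w.length + k + tseq β k + 1,
      β ^ j * (prefD β (fun i => w.getD i 0) w.length +
        (prefD β (eps β 1) k + (β ^ (k + tseq β k + 1))⁻¹) / β ^ w.length
        - prefD β (digF β w k) j) ∈ Set.Ioc (0:ℝ) 1 := by
    intro j hj
    have hpj : (0:ℝ) < β ^ j := pow_pos hβ0 j
    constructor
    · apply mul_pos hpj
      have hmono : prefD β (digF β w k) j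
          ≤ prefD β (digF β w k) (w.length + k + tseq β k + 1) :=
        prefD_mono hβ (digF_nonneg hβ hadm k) hj
      have hNNinv : (0:ℝ) < (β ^ (w.length + k + tseq β k + 1))⁻¹ := by positivity
      linarith [hxv_pref]
    · have hup : prefD β (fun i => w.getD i 0) w.length +
          (prefD β (eps β 1) k + (β ^ (k + tseq β k + 1))⁻¹) / β ^ w.length
          - prefD β (digF β w k) j ≤ (β ^ j)⁻¹ := by
        rcases Nat.lt_or_ge w.length j with hj1 | hj1
        · rcases Nat.lt_or_ge (w.length + k) j with hj2 | hj2
          · -- case (c) : w.length + k < j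
            have h1 : prefD β (digF β w k) j = prefD β (digF β w k) (w.length + k) :=
              prefD_digF_high β w k (by omega)
            have h2 : prefD β (digF β w k) (w.length + k + tseq β k + 1)
                = prefD β (digF β w k) (w.length + k) :=
              prefD_digF_high β w k (by omega)
            have h3 : ((β:ℝ) ^ (w.length + k + tseq β k + 1))⁻¹ ≤ (β ^ j)⁻¹ :=
              inv_pow_le_inv_pow hβ hj
            linarith [hxv_pref]
          · -- case (b) : w.length < j ≤ w.length + k
            obtain ⟨m, rfl⟩ : ∃ m, j = w.length + m := ⟨j - w.length, by omega⟩
            have hm1 : 1 ≤ m := by omega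
            have hmk : m ≤ k := by omega
            have hpm : (0:ℝ) < β ^ m := pow_pos hβ0 m
            rw [prefD_digF_mid β w k hmk]
            have h4 : prefD β (eps β 1) k + (β ^ (k + tseq β k + 1))⁻¹
                - prefD β (eps β 1) m ≤ (β ^ m)⁻¹ := by
              have ha1 := hdivTm k
              have ha2 := hdivTm m
              have ha3 : (Tbeta β)^[m] 1 / β ^ m ≤ (β ^ m)⁻¹ := by
                rw [inv_eq_one_div]
                gcongr
                exact (iter_mem_Ioc (β := β) h1m m).2
              linarith [hdiv1]
            have h5 : (prefD β (eps β 1) k + (β ^ (k + tseq β k + 1))⁻¹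
                - prefD β (eps β 1) m) / β ^ w.length ≤ (β ^ m)⁻¹ / β ^ w.length := by
              gcongr
            rw [hmerge m w.length, sub_div] at h5
            linarith
        · -- case (a) : j ≤ w.length
          have h6 := hbbd j hj1
          linarith [hxvb]
      calc β ^ j * (prefD β (fun i => w.getD i 0) w.length +
            (prefD β (eps β 1) k + (β ^ (k + tseq β k + 1))⁻¹) / β ^ w.length
            - prefD β (digF β w k) j)
          ≤ β ^ j * (β ^ j)⁻¹ := by
            exact mul_le_mul_of_nonneg_left hup (le_of_lt hpj)
        _ = 1 := mul_inv_cancel₀ (ne_of_gt hpj)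
  -- lengths
  have hlenW : (w ++ estarWord β k ++ List.replicate (tseq β k + 1) 0).length
      = w.length + k + tseq β k + 1 := by
    rw [word_length]
    omega
  -- x0 is a member of the long cylinder
  have hmem : prefD β (fun i => w.getD i 0) w.length +
      (prefD β (eps β 1) k + (β ^ (k + tseq β k + 1))⁻¹) / β ^ w.length
      ∈ cyl β (w ++ estarWord β k ++ List.replicate (tseq β k + 1) 0) := by
    rw [mem_cyl_iff hβ]
    intro j hj
    rw [hlenW] at hj
    have h := hB j hj
    have hpc : prefD β (fun i =>
        (w ++ estarWord β k ++ List.replicate (tseq β k + 1) 0).getD i 0) j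
        = prefD β (digF β w k) j :=
      prefD_congr (fun i _ => word_getD β w k (tseq β k + 1) i)
    rw [hpc]
    exact h
  -- x0 is an upper bound of the long cylinder
  have hub : ∀ y ∈ cyl β (w ++ estarWord β k ++ List.replicate (tseq β k + 1) 0),
      y ≤ prefD β (fun i => w.getD i 0) w.length +
        (prefD β (eps β 1) k + (β ^ (k + tseq β k + 1))⁻¹) / β ^ w.length := by
    intro y hy
    have h := (mem_cyl_iff hβ _ y).mp hy _ le_rfl
    rw [hlenW] at h
    have hpc : prefD β (fun i =>
        (w ++ estarWord β k ++ List.replicate (tseq β k + 1) 0).getD i 0)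
        (w.length + k + tseq β k + 1) = prefD β (digF β w k) (w.length + k + tseq β k + 1) :=
      prefD_congr (fun i _ => word_getD β w k (tseq β k + 1) i)
    rw [hpc] at h
    have hinv : β ^ (w.length + k + tseq β k + 1) * (β ^ (w.length + k + tseq β k + 1))⁻¹ = 1 :=
      mul_inv_cancel₀ (ne_of_gt hpNN)
    nlinarith [h.2, hxv_pref]
  refine ⟨⟨hmem, hub⟩, ?_, ?_⟩
  · -- x0 ∈ Icc 0 1
    have h := hB 0 (by omega)
    rw [pow_zero, one_mul, prefD_zero] at h
    constructor <;> [linarith [h.1]; linarith [h.2]]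
  · -- x0 not in the closure of the complement
    intro hc
    have hsubcl : Set.Icc (0:ℝ) 1 \ cyl β w ⊆
        Set.Icc 0 (prefD β (fun i => w.getD i 0) w.length) ∪
        Set.Icc (prefD β (fun i => w.getD i 0) w.length + (β ^ w.length)⁻¹) 1 := by
      rw [hchar]
      rintro x ⟨hx01, hxn⟩
      rw [Set.mem_Ioc] at hxn
      push_neg at hxn
      rcases le_or_gt x (prefD β (fun i => w.getD i 0) w.length) with h | h
      · exact Or.inl ⟨hx01.1, h⟩
      · exact Or.inr ⟨le_of_lt (hxn h), hx01.2⟩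
    have hcl := closure_minimal hsubcl ((isClosed_Icc).union isClosed_Icc)
    have hmem2 := hcl hc
    have hlt1 : prefD β (fun i => w.getD i 0) w.length <
        prefD β (fun i => w.getD i 0) w.length +
          (prefD β (eps β 1) k + (β ^ (k + tseq β k + 1))⁻¹) / β ^ w.length :=
      lt_add_of_pos_right _ (div_pos hupos hpn)
    have hlt2 : prefD β (fun i => w.getD i 0) w.length +
          (prefD β (eps β 1) k + (β ^ (k + tseq β k + 1))⁻¹) / β ^ w.length <
        prefD β (fun i => w.getD i 0) w.length + (β ^ w.length)⁻¹ := by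
      have h1 : (prefD β (eps β 1) k + (β ^ (k + tseq β k + 1))⁻¹) / β ^ w.length
          < 1 / β ^ w.length := by gcongr
      rw [one_div] at h1
      linarith
    rcases hmem2 with h | h
    · linarith [h.2]
    · linarith [h.1]

/-- Let `k ≥ 1` and let `(ε_1,…,ε_n)` be an admissible word whose basic
interval is full. Then
`x_0 = ε_1/β + ⋯ + ε_n/β^n + ε*_1/β^{n+1} + ⋯ + ε*_k/β^{n+k} + 1/β^{n+k+t_k+1}`
is the right endpoint (the maximum) of the basic interval
`I(ε_1,…,ε_n, ε*_1,…,ε*_k, 0^{t_k+1})`, and `x_0` lies in the interior of `I(ε_1,…,ε_n)`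
taken in `[0,1]`. -/
theorem right_endpoint_in_interior (β : ℝ) (hβ : 1 < β) (k : ℕ) (hk : 1 ≤ k)
    (w : List ℤ) (hadm : Admissible β w) (hfull : IsFull β w) :
    IsGreatest (cyl β (w ++ estarWord β k ++ List.replicate (tseq β k + 1) 0))
        ((∑ j ∈ Finset.range w.length, (w.getD j 0 : ℝ) / β ^ (j + 1)) +
          (∑ j ∈ Finset.range k, (eps β 1 j : ℝ) / β ^ (w.length + j + 1)) +
          1 / β ^ (w.length + k + tseq β k + 1)) ∧
      ((∑ j ∈ Finset.range w.length, (w.getD j 0 : ℝ) / β ^ (j + 1)) +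
          (∑ j ∈ Finset.range k, (eps β 1 j : ℝ) / β ^ (w.length + j + 1)) +
          1 / β ^ (w.length + k + tseq β k + 1)) ∈ intIn01 (cyl β w) := by
  have hβ0 : (0:ℝ) < β := by linarith
  have hx0 : (∑ j ∈ Finset.range w.length, (w.getD j 0 : ℝ) / β ^ (j + 1)) +
          (∑ j ∈ Finset.range k, (eps β 1 j : ℝ) / β ^ (w.length + j + 1)) +
          1 / β ^ (w.length + k + tseq β k + 1)
      = prefD β (fun i => w.getD i 0) w.length +
          (prefD β (eps β 1) k + (β ^ (k + tseq β k + 1))⁻¹) / β ^ w.length := by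
    have hsum2 : (∑ j ∈ Finset.range k, (eps β 1 j : ℝ) / β ^ (w.length + j + 1))
        = prefD β (eps β 1) k / β ^ w.length := by
      unfold prefD
      rw [Finset.sum_div]
      refine Finset.sum_congr rfl fun j _ => ?_
      rw [div_div, ← pow_add]
      congr 2
      omega
    have hsum3 : (1:ℝ) / β ^ (w.length + k + tseq β k + 1)
        = (β ^ (k + tseq β k + 1))⁻¹ / β ^ w.length := by
      rw [one_div, div_eq_mul_inv, ← mul_inv, ← pow_add]
      congr 2
      omega
    rw [hsum2, hsum3, add_div]
    show prefD β (fun i => w.getD i 0) w.length + _ + _ = _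
    ring
  rw [hx0]
  exact main_aux hβ k hk w hadm hfull
end
end
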